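/- arXiv:2210.06241 — 2 statements merged into one kernel-verified Lean document; each statement's English description precedes it below -/
import Mathlib

section
/- If there exists a binary self-orthogonal [45, 5, 22] code, then for every integer m ≥ 1 there exists a binary self-orthogonal [31m + 14, 5, 16m + 6] code; combined with the Griesmer bound, d_{so}(31m + 14, 5) = d(31m + 14, 5) = 16m + 6 for all m ≥ 1. -/
/-- A binary linear code is self-orthogonal if all pairs of codewords have zero
inner product over `F_2`. -/
def IsSO {n : ℕ} (C : Submodule (ZMod 2) (Fin n → ZMod 2)) : Prop :=
  ∀ x ∈ C, ∀ y ∈ C, ∑ i, x i * y i = 0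

/-- `C` has minimum distance exactly `d`. -/
def IsMinDist {n : ℕ} (C : Submodule (ZMod 2) (Fin n → ZMod 2)) (d : ℕ) : Prop :=
  (∃ x ∈ C, x ≠ 0 ∧ hammingNorm x = d) ∧ ∀ x ∈ C, x ≠ 0 → d ≤ hammingNorm x

/-- `d(n,k)`: the largest minimum distance among binary `[n,k]` linear codes. -/
noncomputable def dLin (n k : ℕ) : ℕ :=
  sSup {d | ∃ C : Submodule (ZMod 2) (Fin n → ZMod 2),
    Module.finrank (ZMod 2) C = k ∧ IsMinDist C d}

/-- `d_so(n,k)`: the largest minimum distance among binary self-orthogonal `[n,k]` codes. -/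
noncomputable def dSO (n k : ℕ) : ℕ :=
  sSup {d | ∃ C : Submodule (ZMod 2) (Fin n → ZMod 2),
    IsSO C ∧ Module.finrank (ZMod 2) C = k ∧ IsMinDist C d}


section Aux
open Finset


lemma z2_ne_zero : ∀ a : ZMod 2, a ≠ 0 → a = 1 := by decide
lemma z2_add_ne : ∀ a b : ZMod 2, b ≠ 0 → (a + b ≠ 0 ↔ a = 0) := by decide

def gsum : ℕ → ℕ → ℕ
  | 0, _ => 0
  | k+1, d => d + gsum k ((d+1)/2)

lemma gsum_mono (k : ℕ) : ∀ {d d' : ℕ}, d ≤ d' → gsum k d ≤ gsum k d' := by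
  induction k with
  | zero => intro d d' _; simp [gsum]
  | succ k ih => intro d d' h; exact Nat.add_le_add h (ih (Nat.div_le_div_right (by omega)))

lemma griesmer (k : ℕ) : ∀ (ι : Type) [Fintype ι]
    (C : Submodule (ZMod 2) (ι → ZMod 2)) (d : ℕ), 1 ≤ d →
    Module.finrank (ZMod 2) C = k →
    (∀ x ∈ C, x ≠ 0 → d ≤ hammingNorm x) → gsum k d ≤ Fintype.card ι := by
  induction k with
  | zero => intro ι _ C d _ _ _; simp [gsum]
  | succ k ih =>
    intro ι _ C d hd hrk hmin
    have hC : C ≠ ⊥ := by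
      intro h
      rw [h, finrank_bot] at hrk
      omega
    obtain ⟨x₀, hx₀C, hx₀⟩ := Submodule.exists_mem_ne_zero_of_ne_bot hC
    set Wset := {w : ℕ | ∃ x, x ∈ C ∧ x ≠ 0 ∧ hammingNorm x = w} with hWdef
    have hWne : Wset.Nonempty := ⟨_, x₀, hx₀C, hx₀, rfl⟩
    obtain ⟨x, hxC, hx0, hxw⟩ := Nat.sInf_mem hWne
    set w := sInf Wset with hwdef
    have hwle : ∀ c, c ∈ C → c ≠ 0 → w ≤ hammingNorm c :=
      fun c h1 h2 => Nat.sInf_le ⟨c, h1, h2, rfl⟩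
    have hdw : d ≤ w := hxw ▸ hmin x hxC hx0
    have hw1 : 1 ≤ w := le_trans hd hdw
    have hwcard : w ≤ Fintype.card ι := hxw ▸ hammingNorm_le_card_fintype
    -- the residual code
    let π : (ι → ZMod 2) →ₗ[ZMod 2] ({i : ι // x i = 0} → ZMod 2) :=
      LinearMap.funLeft (ZMod 2) (ZMod 2) Subtype.val
    have hπx : π x = 0 := by
      funext i'
      exact i'.2
    let ρ : C →ₗ[ZMod 2] ({i : ι // x i = 0} → ZMod 2) := π.comp C.subtype
    -- kernel of ρ is the span of x
    have hker : LinearMap.ker ρ = Submodule.span (ZMod 2) {(⟨x, hxC⟩ : C)} := by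
      apply le_antisymm
      · rintro ⟨c, hcC⟩ hc
        have hc' : ∀ i : ι, x i = 0 → c i = 0 := by
          intro i hi
          have := congrFun (show π c = 0 from hc) ⟨i, hi⟩
          exact this
        by_cases hc0 : c = 0
        · have : (⟨c, hcC⟩ : C) = 0 := Subtype.ext hc0
          rw [this]; exact Submodule.zero_mem _
        · -- support of c is contained in support of x, and weights agree
          have hsub : (univ.filter fun i => c i ≠ 0) ⊆ (univ.filter fun i => x i ≠ 0) := by
            intro i hi
            simp only [mem_filter, mem_univ, true_and] at hi ⊢
            intro hxi
            exact hi (hc' i hxi)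
          have hle : hammingNorm c ≤ hammingNorm x := Finset.card_le_card hsub
          have hge : w ≤ hammingNorm c := hwle c hcC hc0
          have heq : (univ.filter fun i => c i ≠ 0) = (univ.filter fun i => x i ≠ 0) :=
            Finset.eq_of_subset_of_card_le hsub (by
              show hammingNorm x ≤ hammingNorm c
              omega)
          have hcx : c = x := by
            funext i
            by_cases hxi : x i = 0
            · rw [hc' i hxi, hxi]
            · have hin : i ∈ (univ.filter fun i => c i ≠ 0) := by
                rw [heq]; simp [hxi]
              simp only [mem_filter, mem_univ, true_and] at hin
              rw [z2_ne_zero _ hin, z2_ne_zero _ hxi]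
          have : (⟨c, hcC⟩ : C) = ⟨x, hxC⟩ := Subtype.ext hcx
          rw [this]
          exact Submodule.mem_span_singleton_self _
      · rw [Submodule.span_le, Set.singleton_subset_iff]
        show ρ ⟨x, hxC⟩ = 0
        exact hπx
    have hkrank : Module.finrank (ZMod 2) (LinearMap.ker ρ) = 1 := by
      rw [hker]
      exact finrank_span_singleton (by simp [Submodule.mk_eq_zero, hx0])
    have hrange : LinearMap.range ρ = C.map π := by
      rw [LinearMap.range_comp, Submodule.range_subtype]
    have hrk' : Module.finrank (ZMod 2) (C.map π) = k := by
      have := LinearMap.finrank_range_add_finrank_ker ρ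
      rw [hrange, hkrank, hrk] at this
      omega
    -- minimum distance of the residual code
    have hmin' : ∀ y ∈ C.map π, y ≠ 0 → (w+1)/2 ≤ hammingNorm y := by
      rintro y hy hy0
      obtain ⟨c, hcC, rfl⟩ := Submodule.mem_map.mp hy
      have hc0 : c ≠ 0 := by rintro rfl; exact hy0 (map_zero π)
      have hcx0 : c + x ≠ 0 := by
        intro h
        apply hy0
        have : π (c + x) = 0 := by rw [h, map_zero]
        rwa [map_add, hπx, add_zero] at this
      set a := #(univ.filter fun i => c i ≠ 0 ∧ x i ≠ 0) with ha
      set b := #(univ.filter fun i => c i ≠ 0 ∧ ¬ x i ≠ 0) with hb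
      set a2 := #(univ.filter fun i => ¬ c i ≠ 0 ∧ x i ≠ 0) with ha2
      have h1 : hammingNorm c = a + b := by
        show #(univ.filter fun i => c i ≠ 0) = _
        rw [ha, hb, ← filter_filter, ← filter_filter,
          card_filter_add_card_filter_not]
      have h2 : hammingNorm x = a + a2 := by
        show #(univ.filter fun i => x i ≠ 0) = _
        have e1 : (univ.filter fun i => c i ≠ 0 ∧ x i ≠ 0)
            = (univ.filter fun i : ι => x i ≠ 0).filter fun i => c i ≠ 0 := by
          rw [filter_filter]; apply filter_congr; intro i _; exact and_comm
        have e2 : (univ.filter fun i => ¬ c i ≠ 0 ∧ x i ≠ 0)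
            = (univ.filter fun i : ι => x i ≠ 0).filter fun i => ¬ c i ≠ 0 := by
          rw [filter_filter]; apply filter_congr; intro i _; exact and_comm
        rw [ha, ha2, e1, e2, card_filter_add_card_filter_not]
      have h3 : hammingNorm (c + x) = a2 + b := by
        show #(univ.filter fun i => (c + x) i ≠ 0) = _
        have : #(univ.filter fun i => (c+x) i ≠ 0)
            = #((univ.filter fun i => (c+x) i ≠ 0).filter fun i => x i ≠ 0)
            + #((univ.filter fun i => (c+x) i ≠ 0).filter fun i => ¬ x i ≠ 0) :=
          (card_filter_add_card_filter_not _).symm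
        rw [this, filter_filter, filter_filter]
        congr 1
        · rw [ha2]
          congr 1
          apply filter_congr
          intro i _
          simp only [Pi.add_apply, not_not]
          constructor
          · rintro ⟨h', hxi⟩; exact ⟨(z2_add_ne _ _ hxi).mp h', hxi⟩
          · rintro ⟨h', hxi⟩; exact ⟨(z2_add_ne _ _ hxi).mpr h', hxi⟩
        · rw [hb]
          congr 1
          apply filter_congr
          intro i _
          simp only [Pi.add_apply, not_not]
          constructor
          · rintro ⟨h', hxi⟩; rw [hxi, add_zero] at h'; exact ⟨h', hxi⟩
          · rintro ⟨h', hxi⟩; rw [hxi, add_zero]; exact ⟨h', rfl⟩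
      have h4 : hammingNorm (π c) = b := by
        rw [hb]
        refine Finset.card_bij (fun i' _ => i'.val) ?_ ?_ ?_
        · intro i' hi'
          simp only [mem_filter, mem_univ, true_and] at hi' ⊢
          exact ⟨hi', by simp [i'.2]⟩
        · intro a1 _ a2 _ h
          exact Subtype.ext h
        · intro i hi
          simp only [mem_filter, mem_univ, true_and, not_not] at hi
          refine ⟨⟨i, hi.2⟩, ?_, rfl⟩
          simp only [mem_filter, mem_univ, true_and]
          exact hi.1
      have i1 : w ≤ a + b := h1 ▸ hwle c hcC hc0
      have i2 : w ≤ a2 + b := h3 ▸ hwle (c + x) (C.add_mem hcC hxC) hcx0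
      have i3 : w = a + a2 := hxw ▸ h2.symm ▸ rfl
      rw [h4]
      omega
    have hcard' : Fintype.card {i : ι // x i = 0} = Fintype.card ι - w := by
      rw [Fintype.card_subtype]
      have := card_filter_add_card_filter_not (s := (univ : Finset ι))
        (p := fun i => x i = 0)
      have hx' : #(univ.filter fun i => ¬ x i = 0) = w := by
        rw [← hxw]; rfl
      have hcu : #(univ : Finset ι) = Fintype.card ι := rfl
      omega
    have := ih {i : ι // x i = 0} (C.map π) ((w+1)/2) (by omega) hrk' hmin'
    rw [hcard'] at this
    have hmono : gsum k ((d+1)/2) ≤ gsum k ((w+1)/2) :=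
      gsum_mono k (Nat.div_le_div_right (by omega))
    show d + gsum k ((d+1)/2) ≤ Fintype.card ι
    omega

lemma card_nonzero : Fintype.card {v : Fin 5 → ZMod 2 // v ≠ 0} = 31 := by decide

noncomputable def enz : Fin 31 ≃ {v : Fin 5 → ZMod 2 // v ≠ 0} :=
  (Fintype.equivFinOfCardEq card_nonzero).symm

noncomputable def Splex : (Fin 5 → ZMod 2) →ₗ[ZMod 2] (Fin 31 → ZMod 2) where
  toFun u := fun j => ∑ i, (enz j).val i * u i
  map_add' u v := by
    funext j
    simp [mul_add, Finset.sum_add_distrib]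
  map_smul' r u := by
    funext j
    show ∑ i, (enz j).val i * (r * u i) = r * ∑ i, (enz j).val i * u i
    rw [Finset.mul_sum]
    exact Finset.sum_congr rfl fun i _ => by ring

lemma key_vv : ∀ i j : Fin 5, ∑ v : Fin 5 → ZMod 2, v i * v j = 0 := by decide

lemma key_wt : ∀ u : Fin 5 → ZMod 2, u ≠ 0 →
    #(univ.filter fun v : Fin 5 → ZMod 2 => ∑ i, v i * u i ≠ 0) = 16 := by decide

lemma Splex_orth (u w : Fin 5 → ZMod 2) : ∑ j, Splex u j * Splex w j = 0 := by
  have h1 : ∑ j : Fin 31, Splex u j * Splex w j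
      = ∑ v : {v : Fin 5 → ZMod 2 // v ≠ 0}, (∑ i, v.val i * u i) * (∑ i, v.val i * w i) :=
    Equiv.sum_comp enz (fun v => (∑ i, v.val i * u i) * (∑ i, v.val i * w i))
  rw [h1]
  rw [← Finset.sum_subtype (univ.filter fun v : Fin 5 → ZMod 2 => v ≠ 0)
    (by simp) (fun v => (∑ i, v i * u i) * (∑ i, v i * w i))]
  have h2 : ∑ v ∈ univ.filter (fun v : Fin 5 → ZMod 2 => v ≠ 0),
      (∑ i, v i * u i) * (∑ i, v i * w i)
      = ∑ v : Fin 5 → ZMod 2, (∑ i, v i * u i) * (∑ i, v i * w i) := by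
    rw [← Finset.sum_filter_add_sum_filter_not univ
      (fun v : Fin 5 → ZMod 2 => v ≠ 0)]
    have : ∑ v ∈ univ.filter (fun v : Fin 5 → ZMod 2 => ¬ v ≠ 0),
        (∑ i, v i * u i) * (∑ i, v i * w i) = 0 := by
      apply Finset.sum_eq_zero
      intro v hv
      simp only [mem_filter, mem_univ, true_and, not_not] at hv
      subst hv
      simp
    rw [this, add_zero]
  rw [h2]
  calc ∑ v : Fin 5 → ZMod 2, (∑ i, v i * u i) * (∑ i, v i * w i)
      = ∑ v : Fin 5 → ZMod 2, ∑ i, ∑ i', (v i * u i) * (v i' * w i') := by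
        exact Finset.sum_congr rfl fun v _ => Finset.sum_mul_sum _ _ _ _
    _ = ∑ i, ∑ v : Fin 5 → ZMod 2, ∑ i', (v i * u i) * (v i' * w i') := Finset.sum_comm
    _ = ∑ i, ∑ i', ∑ v : Fin 5 → ZMod 2, (v i * u i) * (v i' * w i') :=
        Finset.sum_congr rfl fun i _ => Finset.sum_comm
    _ = ∑ i, ∑ i', (∑ v : Fin 5 → ZMod 2, v i * v i') * (u i * w i') := by
        refine Finset.sum_congr rfl fun i _ => Finset.sum_congr rfl fun i' _ => ?_
        rw [Finset.sum_mul]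
        exact Finset.sum_congr rfl fun v _ => by ring
    _ = 0 := by simp [key_vv]

lemma Splex_wt {u : Fin 5 → ZMod 2} (hu : u ≠ 0) : hammingNorm (Splex u) = 16 := by
  rw [← key_wt u hu]
  refine Finset.card_bij (fun j _ => (enz j).val) ?_ ?_ ?_
  · intro j hj
    simp only [mem_filter, mem_univ, true_and] at hj ⊢
    exact hj
  · intro j1 _ j2 _ h
    exact enz.injective (Subtype.ext h)
  · intro v hv
    simp only [mem_filter, mem_univ, true_and] at hv
    have hv0 : v ≠ 0 := by
      rintro rfl
      simp at hv
    refine ⟨enz.symm ⟨v, hv0⟩, ?_, by simp⟩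
    simp only [mem_filter, mem_univ, true_and]
    show ∑ i, (enz (enz.symm ⟨v, hv0⟩)).val i * u i ≠ 0
    rw [Equiv.apply_symm_apply]
    exact hv

noncomputable def appendLM (n : ℕ) :
    ((Fin n → ZMod 2) × (Fin 31 → ZMod 2)) →ₗ[ZMod 2] (Fin (n+31) → ZMod 2) where
  toFun p := Fin.append p.1 p.2
  map_add' p q := by
    funext k
    apply Fin.addCases (motive := fun k => Fin.append (p + q).1 (p + q).2 k
      = (Fin.append p.1 p.2 + Fin.append q.1 q.2) k) <;>
      intro i <;> simp [Fin.append_left, Fin.append_right]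
  map_smul' r p := by
    funext k
    apply Fin.addCases (motive := fun k => Fin.append (r • p).1 (r • p).2 k
      = (r • Fin.append p.1 p.2) k) <;>
      intro i <;> simp [Fin.append_left, Fin.append_right]

lemma hn_append {n : ℕ} (x : Fin n → ZMod 2) (y : Fin 31 → ZMod 2) :
    hammingNorm (Fin.append x y) = hammingNorm x + hammingNorm y := by
  simp only [hammingNorm, Finset.card_filter]
  rw [Fin.sum_univ_add]
  simp [Fin.append_left, Fin.append_right]

lemma ip_append {n : ℕ} (x x' : Fin n → ZMod 2) (y y' : Fin 31 → ZMod 2) :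
    ∑ k : Fin (n+31), (Fin.append x y) k * (Fin.append x' y') k
      = (∑ i, x i * x' i) + (∑ j, y j * y' j) := by
  rw [Fin.sum_univ_add]
  simp [Fin.append_left, Fin.append_right]

lemma step {n : ℕ} (C : Submodule (ZMod 2) (Fin n → ZMod 2)) (d : ℕ)
    (hso : IsSO C) (hrk : Module.finrank (ZMod 2) C = 5) (hmd : IsMinDist C d) :
    ∃ C' : Submodule (ZMod 2) (Fin (n+31) → ZMod 2),
      IsSO C' ∧ Module.finrank (ZMod 2) C' = 5 ∧ IsMinDist C' (d + 16) := by
  let bC : Module.Basis (Fin 5) (ZMod 2) C := Module.finBasisOfFinrankEq (ZMod 2) C hrk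
  let φ : C →ₗ[ZMod 2] (Fin (n+31) → ZMod 2) :=
    (appendLM n).comp (LinearMap.prod C.subtype (Splex ∘ₗ bC.equivFun.toLinearMap))
  have hφ : ∀ c : C, φ c = Fin.append (c : Fin n → ZMod 2) (Splex (bC.equivFun c)) :=
    fun c => rfl
  have hinj : Function.Injective φ := by
    intro c1 c2 h
    apply Subtype.ext
    funext i
    simpa [hφ, Fin.append_left] using congrFun h (Fin.castAdd 31 i)
  have hvalne : ∀ c : C, c ≠ 0 → (c : Fin n → ZMod 2) ≠ 0 := by
    intro c hc hcv
    exact hc (Subtype.ext hcv)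
  have hune : ∀ c : C, c ≠ 0 → bC.equivFun c ≠ 0 := by
    intro c hc h
    exact hc (by simpa using (LinearEquiv.map_eq_zero_iff bC.equivFun).mp h)
  refine ⟨LinearMap.range φ, ?_, ?_, ?_, ?_⟩
  · rintro z ⟨c, rfl⟩ z' ⟨c', rfl⟩
    rw [hφ, hφ, ip_append, hso c c.2 c' c'.2, zero_add, Splex_orth]
  · rw [LinearMap.finrank_range_of_inj hinj, hrk]
  · obtain ⟨x, hxC, hx0, hxw⟩ := hmd.1
    refine ⟨φ ⟨x, hxC⟩, LinearMap.mem_range_self _ _, ?_, ?_⟩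
    · intro h
      have : (⟨x, hxC⟩ : C) = 0 := hinj (by rw [h, map_zero])
      exact hx0 (by simpa using congrArg Subtype.val this)
    · rw [hφ, hn_append, Splex_wt (hune _ (by simp [Submodule.mk_eq_zero, hx0]))]
      simp [hxw]
  · rintro z ⟨c, rfl⟩ hz0
    have hc0 : c ≠ 0 := by
      rintro rfl
      exact hz0 (map_zero φ)
    rw [hφ, hn_append, Splex_wt (hune c hc0)]
    have := hmd.2 (c : Fin n → ZMod 2) c.2 (hvalne c hc0)
    omega

lemma exists_code (h45 : ∃ C : Submodule (ZMod 2) (Fin 45 → ZMod 2),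
      IsSO C ∧ Module.finrank (ZMod 2) C = 5 ∧ IsMinDist C 22) :
    ∀ m : ℕ, ∃ C : Submodule (ZMod 2) (Fin (31*m + 45) → ZMod 2),
      IsSO C ∧ Module.finrank (ZMod 2) C = 5 ∧ IsMinDist C (16*m + 22) := by
  intro m
  induction m with
  | zero =>
    have e1 : 31*0 + 45 = 45 := by norm_num
    have e2 : 16*0 + 22 = 22 := by norm_num
    rw [e1, e2]
    exact h45
  | succ m ih =>
    obtain ⟨C, h1, h2, h3⟩ := ih
    have key := step C (16*m+22) h1 h2 h3
    have e1 : 31*(m+1) + 45 = (31*m + 45) + 31 := by ring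
    have e2 : 16*(m+1) + 22 = (16*m + 22) + 16 := by ring
    rw [e1, e2]
    exact key

lemma gsum5 (m : ℕ) : gsum 5 (16*m+7) = 31*m+15 := by
  simp only [gsum]
  omega

lemma dist_le (m : ℕ) (C : Submodule (ZMod 2) (Fin (31*m+14) → ZMod 2)) (d : ℕ)
    (h2 : Module.finrank (ZMod 2) C = 5) (h3 : IsMinDist C d) : d ≤ 16*m+6 := by
  by_contra hlt
  push_neg at hlt
  have hd1 : 1 ≤ d := by omega
  have hg := griesmer 5 (Fin (31*m+14)) C d hd1 h2 h3.2
  rw [Fintype.card_fin] at hg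
  have hm := gsum_mono 5 (show 16*m+7 ≤ d by omega)
  rw [gsum5] at hm
  omega

lemma main_of_ex (m : ℕ)
    (hex : ∃ C : Submodule (ZMod 2) (Fin (31*m+14) → ZMod 2),
      IsSO C ∧ Module.finrank (ZMod 2) C = 5 ∧ IsMinDist C (16*m+6)) :
    dSO (31*m+14) 5 = 16*m+6 ∧ dLin (31*m+14) 5 = 16*m+6 := by
  obtain ⟨C, h1, h2, h3⟩ := hex
  constructor
  · unfold dSO
    apply le_antisymm
    · refine csSup_le ⟨16*m+6, ?_⟩ ?_
      · exact ⟨C, h1, h2, h3⟩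
      · rintro d ⟨C', _, hrk', hmd'⟩
        exact dist_le m C' d hrk' hmd'
    · refine le_csSup ⟨16*m+6, ?_⟩ ?_
      · rintro d ⟨C', _, hrk', hmd'⟩
        exact dist_le m C' d hrk' hmd'
      · exact ⟨C, h1, h2, h3⟩
  · unfold dLin
    apply le_antisymm
    · refine csSup_le ⟨16*m+6, ?_⟩ ?_
      · exact ⟨C, h2, h3⟩
      · rintro d ⟨C', hrk', hmd'⟩
        exact dist_le m C' d hrk' hmd'
    · refine le_csSup ⟨16*m+6, ?_⟩ ?_
      · rintro d ⟨C', hrk', hmd'⟩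
        exact dist_le m C' d hrk' hmd'
      · exact ⟨C, h2, h3⟩

end Aux

/-- If there exists a binary self-orthogonal `[45, 5, 22]` code, then for every `m ≥ 1`
there exists a binary self-orthogonal `[31m + 14, 5, 16m + 6]` code; combined with the
Griesmer bound, `d_so(31m + 14, 5) = d(31m + 14, 5) = 16m + 6`. -/
theorem dso_31m14 
    (h : ∃ C : Submodule (ZMod 2) (Fin 45 → ZMod 2),
      IsSO C ∧ Module.finrank (ZMod 2) C = 5 ∧ IsMinDist C 22) :
    ∀ m : ℕ, 1 ≤ m →
      (∃ C : Submodule (ZMod 2) (Fin (31 * m + 14) → ZMod 2),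
        IsSO C ∧ Module.finrank (ZMod 2) C = 5 ∧ IsMinDist C (16 * m + 6)) ∧
      dSO (31 * m + 14) 5 = 16 * m + 6 ∧ dLin (31 * m + 14) 5 = 16 * m + 6 := by
  intro m hm
  obtain ⟨m', rfl⟩ : ∃ m', m = m' + 1 := ⟨m - 1, by omega⟩
  have e1 : 31 * (m' + 1) + 14 = 31 * m' + 45 := by ring
  have e2 : 16 * (m' + 1) + 6 = 16 * m' + 22 := by ring
  have hex : ∃ C : Submodule (ZMod 2) (Fin (31 * (m' + 1) + 14) → ZMod 2),
      IsSO C ∧ Module.finrank (ZMod 2) C = 5 ∧ IsMinDist C (16 * (m' + 1) + 6) := by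
    rw [e1, e2]
    exact exists_code h m'
  exact ⟨hex, main_of_ex (m' + 1) hex⟩
end

section
/- If there exists a binary self-orthogonal [60, 5, 30] code, then for every m ≥ 1 there exists a binary self-orthogonal [31m + 29, 5, 16m + 14] code, and by the Griesmer bound d_{so}(31m + 29, 5) = d(31m + 29, 5) = 16m + 14. -/
/-- Columns of the `[31,5]` simplex code generator matrix: binary expansions of `1..31`. -/
def scol (j : Fin 31) : Fin 5 → ZMod 2 := fun i => if Nat.testBit ((j : ℕ) + 1) (i : ℕ) then 1 else 0

set_option maxRecDepth 100000 in
lemma scol_card : ∀ x : Fin 5 → ZMod 2, x ≠ 0 →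
    (Finset.univ.filter fun j : Fin 31 => (∑ i, x i * scol j i) ≠ 0).card = 16 := by decide

set_option maxRecDepth 100000 in
set_option maxHeartbeats 2000000 in
lemma scol_orth : ∀ x y : Fin 5 → ZMod 2,
    ∑ j : Fin 31, (∑ i, x i * scol j i) * (∑ i, y i * scol j i) = 0 := by decide

lemma norm_append {m k : ℕ} (u : Fin m → ZMod 2) (v : Fin k → ZMod 2) :
    hammingNorm (Fin.append u v) = hammingNorm u + hammingNorm v := by
  simp only [hammingNorm, Finset.card_filter]
  rw [Fin.sum_univ_add]
  simp [Fin.append_left, Fin.append_right]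

lemma scol_norm (x : Fin 5 → ZMod 2) (hx : x ≠ 0) :
    hammingNorm (fun j : Fin 31 => ∑ i, x i * scol j i) = 16 := by
  simpa [hammingNorm] using scol_card x hx

/-- The extension step: from a self-orthogonal `[n,5,d]` code, get an `[n+31,5,d+16]` one. -/
lemma extend_step {n d : ℕ} (C : Submodule (ZMod 2) (Fin n → ZMod 2))
    (hso : IsSO C) (hrk : Module.finrank (ZMod 2) C = 5) (hmd : IsMinDist C d) :
    ∃ C' : Submodule (ZMod 2) (Fin (n + 31) → ZMod 2),
      IsSO C' ∧ Module.finrank (ZMod 2) C' = 5 ∧ IsMinDist C' (d + 16) := by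
  classical
  have b : Module.Basis (Fin 5) (ZMod 2) C := Module.finBasisOfFinrankEq (ZMod 2) C hrk
  let cmap : (Fin 5 → ZMod 2) →ₗ[ZMod 2] (Fin n → ZMod 2) :=
    C.subtype ∘ₗ (b.equivFun.symm : (Fin 5 → ZMod 2) ≃ₗ[ZMod 2] C).toLinearMap
  have cmap_inj : Function.Injective cmap :=
    C.injective_subtype.comp b.equivFun.symm.injective
  have cmap_mem : ∀ x, cmap x ∈ C := fun x => (b.equivFun.symm x).2
  have cmap_surj : ∀ c ∈ C, ∃ x, cmap x = c := by
    intro c hc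
    refine ⟨b.equivFun ⟨c, hc⟩, ?_⟩
    have h2 := congrArg Subtype.val (b.sum_repr ⟨c, hc⟩)
    simpa [cmap] using h2
  let smap : (Fin 5 → ZMod 2) → (Fin 31 → ZMod 2) := fun x j => ∑ i, x i * scol j i
  let φ : (Fin 5 → ZMod 2) →ₗ[ZMod 2] (Fin (n + 31) → ZMod 2) :=
    { toFun := fun x => Fin.append (cmap x) (smap x)
      map_add' := by
        intro x y
        funext i
        refine Fin.addCases (fun i => ?_) (fun i => ?_) i <;>
          simp [smap, Fin.append_left, Fin.append_right, add_mul, Finset.sum_add_distrib]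
      map_smul' := by
        intro c x
        funext i
        refine Fin.addCases (fun i => ?_) (fun i => ?_) i <;>
          simp [smap, Fin.append_left, Fin.append_right, mul_assoc, Finset.mul_sum] }
  have φ_apply : ∀ x, φ x = Fin.append (cmap x) (smap x) := fun _ => rfl
  have φ_inj : Function.Injective φ := by
    intro x y hxy
    apply cmap_inj
    funext i
    have := congrFun hxy (Fin.castAdd 31 i)
    simpa [φ_apply, Fin.append_left] using this
  refine ⟨LinearMap.range φ, ?_, ?_, ?_, ?_⟩
  · -- IsSO
    rintro _ ⟨x, rfl⟩ _ ⟨y, rfl⟩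
    rw [φ_apply, φ_apply, Fin.sum_univ_add]
    simp only [Fin.append_left, Fin.append_right]
    rw [hso _ (cmap_mem x) _ (cmap_mem y), scol_orth x y, add_zero]
  · -- finrank
    rw [LinearMap.finrank_range_of_inj φ_inj, Module.finrank_pi]
    simp
  · -- min dist achieved
    obtain ⟨c, hc, hc0, hcd⟩ := hmd.1
    obtain ⟨x, hx⟩ := cmap_surj c hc
    have hx0 : x ≠ 0 := by
      rintro rfl
      exact hc0 (hx ▸ (map_zero cmap).symm ▸ by simp [hx.symm, map_zero])
    refine ⟨φ x, ⟨x, rfl⟩, ?_, ?_⟩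
    · intro h0
      apply hc0
      rw [← hx]
      funext i
      have := congrFun h0 (Fin.castAdd 31 i)
      simpa [φ_apply, Fin.append_left] using this
    · rw [φ_apply, norm_append, hx, hcd, scol_norm x hx0]
  · -- min dist lower bound
    rintro _ ⟨x, rfl⟩ hx0
    have hxne : x ≠ 0 := by rintro rfl; exact hx0 (map_zero φ)
    have h1 : cmap x ≠ 0 := fun h => hxne (cmap_inj (by simpa using h))
    have h2 : d ≤ hammingNorm (cmap x) := hmd.2 _ (cmap_mem x) h1
    rw [φ_apply, norm_append, scol_norm x hxne]
    omega

lemma zmod2_ne_zero (a : ZMod 2) (h : a ≠ 0) : a = 1 := by revert a h; decide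

/-- Plotkin-type averaging bound for binary `[n,5,d]` codes. -/
lemma plotkin {n d : ℕ} (C : Submodule (ZMod 2) (Fin n → ZMod 2))
    (hrk : Module.finrank (ZMod 2) C = 5) (hmd : IsMinDist C d) : 31 * d ≤ 16 * n := by
  classical
  have hcard : Fintype.card C = 32 := by
    rw [Module.card_eq_pow_finrank (K := ZMod 2) (V := C), hrk]
    rfl
  -- per-coordinate count bound
  have hcoord : ∀ i : Fin n, (Finset.univ.filter fun c : C => (c : Fin n → ZMod 2) i ≠ 0).card ≤ 16 := by
    intro i
    by_cases hex : ∃ c0 : C, (c0 : Fin n → ZMod 2) i ≠ 0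
    · obtain ⟨c0, hc0⟩ := hex
      have hinj : ∀ c ∈ (Finset.univ.filter fun c : C => (c : Fin n → ZMod 2) i ≠ 0),
          c + c0 ∈ (Finset.univ.filter fun c : C => (c : Fin n → ZMod 2) i = 0) := by
        intro c hc
        simp only [Finset.mem_filter, Finset.mem_univ, true_and] at hc ⊢
        have h1 : (c : Fin n → ZMod 2) i = 1 := zmod2_ne_zero _ hc
        have h2 : (c0 : Fin n → ZMod 2) i = 1 := zmod2_ne_zero _ hc0
        show ((c : Fin n → ZMod 2) + (c0 : Fin n → ZMod 2)) i = 0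
        simp [h1, h2]
        decide
      have hle := Finset.card_le_card_of_injOn (fun c => c + c0) hinj
        (fun a _ b _ h => by simpa using congrArg (· + (-c0)) h)
      have hsplit : (Finset.univ.filter fun c : C => (c : Fin n → ZMod 2) i ≠ 0).card +
          (Finset.univ.filter fun c : C => (c : Fin n → ZMod 2) i = 0).card = 32 := by
        rw [add_comm, Finset.card_filter_add_card_filter_not (fun c : C => (c : Fin n → ZMod 2) i = 0)]
        simpa using hcard
      omega
    · push_neg at hex
      have : (Finset.univ.filter fun c : C => (c : Fin n → ZMod 2) i ≠ 0) = ∅ := by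
        apply Finset.filter_false_of_mem
        intro c _
        simpa using hex c
      simp [this]
  -- total weight bounds
  have hub : ∑ c : C, hammingNorm (c : Fin n → ZMod 2) ≤ 16 * n := by
    have : ∑ c : C, hammingNorm (c : Fin n → ZMod 2) =
        ∑ i : Fin n, (Finset.univ.filter fun c : C => (c : Fin n → ZMod 2) i ≠ 0).card := by
      simp only [hammingNorm, Finset.card_filter]
      rw [Finset.sum_comm]
    rw [this]
    calc ∑ i : Fin n, (Finset.univ.filter fun c : C => (c : Fin n → ZMod 2) i ≠ 0).card
        ≤ ∑ _i : Fin n, 16 := Finset.sum_le_sum fun i _ => hcoord i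
      _ = 16 * n := by simp [mul_comm]
  have hlb : 31 * d ≤ ∑ c : C, hammingNorm (c : Fin n → ZMod 2) := by
    have hsub : (Finset.univ.filter fun c : C => c ≠ 0).card = 31 := by
      rw [Finset.filter_ne', Finset.card_erase_of_mem (Finset.mem_univ _)]
      simp [hcard]
    calc 31 * d = ∑ _c ∈ (Finset.univ.filter fun c : C => c ≠ 0), d := by
          rw [Finset.sum_const, hsub, smul_eq_mul]
      _ ≤ ∑ c ∈ (Finset.univ.filter fun c : C => c ≠ 0), hammingNorm (c : Fin n → ZMod 2) := by
          apply Finset.sum_le_sum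
          intro c hc
          simp only [Finset.mem_filter] at hc
          exact hmd.2 _ c.2 (fun h => hc.2 (Subtype.ext h))
      _ ≤ ∑ c : C, hammingNorm (c : Fin n → ZMod 2) :=
          Finset.sum_le_sum_of_subset (Finset.filter_subset _ _)
  omega

/-- If there exists a binary self-orthogonal `[60, 5, 30]` code, then for every `m ≥ 1`
there exists a binary self-orthogonal `[31m + 29, 5, 16m + 14]` code; combined with the
Griesmer bound, `d_so(31m + 29, 5) = d(31m + 29, 5) = 16m + 14`. -/
theorem dso_31m29 
    (h : ∃ C : Submodule (ZMod 2) (Fin 60 → ZMod 2),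
      IsSO C ∧ Module.finrank (ZMod 2) C = 5 ∧ IsMinDist C 30) :
    ∀ m : ℕ, 1 ≤ m →
      (∃ C : Submodule (ZMod 2) (Fin (31 * m + 29) → ZMod 2),
        IsSO C ∧ Module.finrank (ZMod 2) C = 5 ∧ IsMinDist C (16 * m + 14)) ∧
      dSO (31 * m + 29) 5 = 16 * m + 14 ∧ dLin (31 * m + 29) 5 = 16 * m + 14 := by
  have key : ∀ m : ℕ, 1 ≤ m →
      ∃ C : Submodule (ZMod 2) (Fin (31 * m + 29) → ZMod 2),
        IsSO C ∧ Module.finrank (ZMod 2) C = 5 ∧ IsMinDist C (16 * m + 14) := by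
    intro m hm
    induction m, hm using Nat.le_induction with
    | base =>
      have h60 : 31 * 1 + 29 = 60 := by norm_num
      have h30 : 16 * 1 + 14 = 30 := by norm_num
      rw [h60, h30]
      exact h
    | succ m hm ih =>
      obtain ⟨C, hso, hrk, hmd⟩ := ih
      obtain ⟨C', h1, h2, h3⟩ := extend_step C hso hrk hmd
      have hn : 31 * (m + 1) + 29 = (31 * m + 29) + 31 := by ring
      have hd : 16 * (m + 1) + 14 = (16 * m + 14) + 16 := by ring
      rw [hn, hd]
      exact ⟨C', h1, h2, h3⟩
  intro m hm
  obtain ⟨C, hso, hrk, hmd⟩ := key m hm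
  refine ⟨⟨C, hso, hrk, hmd⟩, ?_, ?_⟩
  · apply IsGreatest.csSup_eq
    constructor
    · exact ⟨C, hso, hrk, hmd⟩
    · rintro d ⟨D, _, hDrk, hDmd⟩
      have := plotkin D hDrk hDmd
      omega
  · apply IsGreatest.csSup_eq
    constructor
    · exact ⟨C, hrk, hmd⟩
    · rintro d ⟨D, hDrk, hDmd⟩
      have := plotkin D hDrk hDmd
      omega
end
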